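/- Let x=0 be an equilibrium of the Caputo system, with ν∈(0,1], and let P∈ℝ^{n×n} be a symmetric positive definite matrix. If zᵀ·P·f(t,z) ≤ 0 for all t∈(hℕ)_{a+(1−ν)h} and all z∈ℝⁿ, then the equilibrium x=0 of the Caputo system is stable. -/

import Mathlib

open Finset Filter Matrix

/-- The `h`-factorial function `t_h^(ν) = h^ν Γ(t/h+1)/Γ(t/h+1-ν)`. -/
noncomputable def hfact (h t ν : ℝ) : ℝ :=
  h ^ ν * Real.Gamma (t / h + 1) / Real.Gamma (t / h + 1 - ν)

/-- The forward `h`-difference operator. -/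
noncomputable def fdiff (h : ℝ) (y : ℝ → ℝ) (t : ℝ) : ℝ := (y (t + h) - y t) / h

/-- The Caputo-like `h`-difference of order `ν ∈ (0,1]` of `y : (hℕ)_a → ℝ`,
evaluated at the grid point `t = a + (1-ν)h + k·h` of `(hℕ)_{a+(1-ν)h}`. -/
noncomputable def caputoD (h a ν : ℝ) (y : ℝ → ℝ) (k : ℕ) : ℝ :=
  if ν = 1 then fdiff h y (a + (k : ℝ) * h)
  else (h / Real.Gamma (1 - ν)) *
    ∑ j ∈ Finset.range (k + 1),
      hfact h (a + (1 - ν) * h + (k : ℝ) * h - (a + (j : ℝ) * h + h)) (-ν) *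
        fdiff h y (a + (j : ℝ) * h)

/-- `x : (hℕ)_a → ℝⁿ` is a solution of the Caputo system
`(_aΔ_{h,*}^ν x)(t) = f(t, x(t+νh))` on `(hℕ)_{a+(1-ν)h}` (componentwise). -/
def IsCaputoSol {n : ℕ} (h a ν : ℝ) (f : ℝ → (Fin n → ℝ) → (Fin n → ℝ))
    (x : ℝ → Fin n → ℝ) : Prop :=
  ∀ (k : ℕ) (i : Fin n),
    caputoD h a ν (fun t => x t i) k
      = f (a + (1 - ν) * h + (k : ℝ) * h) (x (a + ((k : ℝ) + 1) * h)) i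

noncomputable def bb (ν : ℝ) (m : ℕ) : ℝ :=
  Real.Gamma ((m : ℝ) + 1 - ν) / (Real.Gamma (1 - ν) * (m.factorial : ℝ))

lemma bb_pos {ν : ℝ} (hν1 : ν < 1) (m : ℕ) : 0 < bb ν m := by
  have h1 : (0:ℝ) < 1 - ν := by linarith
  have h2 : (0:ℝ) < (m : ℝ) + 1 - ν := by
    have : (0:ℝ) ≤ (m:ℝ) := Nat.cast_nonneg m
    linarith
  exact div_pos (Real.Gamma_pos_of_pos h2)
    (mul_pos (Real.Gamma_pos_of_pos h1) (by positivity))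

lemma bb_zero {ν : ℝ} (hν1 : ν < 1) : bb ν 0 = 1 := by
  have h1 : (0:ℝ) < 1 - ν := by linarith
  have := Real.Gamma_pos_of_pos h1
  simp [bb]
  field_simp
  exact this.ne'

lemma bb_succ {ν : ℝ} (hν1 : ν < 1) (m : ℕ) :
    bb ν (m + 1) = bb ν m * (((m:ℝ) + 1 - ν) / ((m:ℝ) + 1)) := by
  have h2 : (0:ℝ) < (m : ℝ) + 1 - ν := by
    have : (0:ℝ) ≤ (m:ℝ) := Nat.cast_nonneg m
    linarith
  have hg : Real.Gamma (((m:ℝ)+1) + 1 - ν) = ((m:ℝ) + 1 - ν) * Real.Gamma ((m:ℝ) + 1 - ν) := by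
    have : ((m:ℝ)+1) + 1 - ν = ((m:ℝ) + 1 - ν) + 1 := by ring
    rw [this, Real.Gamma_add_one h2.ne']
  have hfac : ((m+1).factorial : ℝ) = ((m:ℝ)+1) * (m.factorial : ℝ) := by
    push_cast [Nat.factorial_succ]; ring
  have hmpos : (0:ℝ) < (m:ℝ) + 1 := by positivity
  have hΓpos : (0:ℝ) < Real.Gamma (1 - ν) := Real.Gamma_pos_of_pos (by linarith)
  have hfpos : (0:ℝ) < (m.factorial : ℝ) := by positivity
  simp only [bb]
  push_cast
  rw [hg, hfac]
  field_simp

lemma bb_anti {ν : ℝ} (hν0 : 0 < ν) (hν1 : ν < 1) : Antitone (bb ν) := by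
  apply antitone_nat_of_succ_le
  intro m
  rw [bb_succ hν1]
  have hb := (bb_pos hν1 m).le
  have h1 : ((m:ℝ) + 1 - ν) / ((m:ℝ) + 1) ≤ 1 := by
    rw [div_le_one (by positivity)]; linarith
  calc bb ν m * (((m:ℝ) + 1 - ν) / ((m:ℝ) + 1)) ≤ bb ν m * 1 :=
        mul_le_mul_of_nonneg_left h1 hb
    _ = bb ν m := mul_one _

lemma hfact_eq {h ν : ℝ} (hh : 0 < h) (hν1 : ν < 1) (m : ℕ) :
    hfact h (((m : ℝ) - ν) * h) (-ν) = h ^ (-ν) * (Real.Gamma (1 - ν) * bb ν m) := by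
  have ht : ((m : ℝ) - ν) * h / h = (m : ℝ) - ν := by field_simp
  have h2 : (0:ℝ) < Real.Gamma (1 - ν) := Real.Gamma_pos_of_pos (by linarith)
  have hden : ((m:ℝ) - ν + 1 - (-ν)) = (m:ℝ) + 1 := by ring
  have hnum : ((m:ℝ) - ν + 1) = (m:ℝ) + 1 - ν := by ring
  have hfac : Real.Gamma ((m:ℝ) + 1) = (m.factorial : ℝ) := Real.Gamma_nat_eq_factorial m
  have hfpos : (0:ℝ) < (m.factorial : ℝ) := by positivity
  rw [hfact, ht, hden, hnum, hfac, bb]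
  field_simp

lemma quad_nonneg {n : ℕ} (P : Matrix (Fin n) (Fin n) ℝ) (hP : P.PosDef)
    (z : Fin n → ℝ) : 0 ≤ z ⬝ᵥ P *ᵥ z := by
  rcases eq_or_ne z 0 with rfl | hz
  · simp
  · have := hP.dotProduct_mulVec_pos hz
    simpa using this.le

lemma quad_symm {n : ℕ} (P : Matrix (Fin n) (Fin n) ℝ) (hPsym : P.IsSymm)
    (z w : Fin n → ℝ) : z ⬝ᵥ P *ᵥ w = w ⬝ᵥ P *ᵥ z := by
  rw [Matrix.dotProduct_mulVec, ← Matrix.mulVec_transpose, hPsym.eq, dotProduct_comm]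

lemma quad_cs {n : ℕ} (P : Matrix (Fin n) (Fin n) ℝ) (hPsym : P.IsSymm) (hP : P.PosDef)
    (z w : Fin n → ℝ) :
    z ⬝ᵥ P *ᵥ w ≤ Real.sqrt (z ⬝ᵥ P *ᵥ z) * Real.sqrt (w ⬝ᵥ P *ᵥ w) := by
  rcases eq_or_ne w 0 with rfl | hw
  · simp [mul_nonneg (Real.sqrt_nonneg _) (Real.sqrt_nonneg _)]
  · set α := z ⬝ᵥ P *ᵥ z with hα
    set β := w ⬝ᵥ P *ᵥ w with hβ
    set γ := z ⬝ᵥ P *ᵥ w with hγ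
    have hβpos : 0 < β := by simpa using hP.dotProduct_mulVec_pos hw
    have hαnn : 0 ≤ α := quad_nonneg P hP z
    have hexp : 0 ≤ β^2*α - 2*β*γ^2 + γ^2*β := by
      have h0 := quad_nonneg P hP (β • z - γ • w)
      have hsym := quad_symm P hPsym w z
      simp only [Matrix.mulVec_sub, Matrix.mulVec_smul, dotProduct_sub, sub_dotProduct,
        dotProduct_smul, smul_dotProduct, smul_eq_mul] at h0
      rw [hsym, ← hα, ← hβ, ← hγ] at h0
      nlinarith [h0]
    have hγ2 : γ^2 ≤ α * β := by nlinarith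
    calc γ ≤ |γ| := le_abs_self γ
      _ = Real.sqrt (γ^2) := (Real.sqrt_sq_eq_abs γ).symm
      _ ≤ Real.sqrt (α * β) := Real.sqrt_le_sqrt hγ2
      _ = Real.sqrt α * Real.sqrt β := Real.sqrt_mul hαnn β

theorem stmt3 {n : ℕ} (hn : 1 ≤ n) (h a ν : ℝ) (hh : 0 < h) (hν0 : 0 < ν) (hν1 : ν ≤ 1)
    (f : ℝ → (Fin n → ℝ) → (Fin n → ℝ))
    (hf0 : ∀ k : ℕ, f (a + (1 - ν) * h + (k : ℝ) * h) 0 = 0)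
    (P : Matrix (Fin n) (Fin n) ℝ) (hPsym : P.IsSymm) (hP : P.PosDef)
    (hle : ∀ (k : ℕ) (z : Fin n → ℝ),
      z ⬝ᵥ P.mulVec (f (a + (1 - ν) * h + (k : ℝ) * h) z) ≤ 0) :
    (∀ ε > (0 : ℝ), ∃ δ > (0 : ℝ), ∀ x : ℝ → Fin n → ℝ,
      IsCaputoSol h a ν f x → ‖x a‖ < δ → ∀ k : ℕ, ‖x (a + (k : ℝ) * h)‖ < ε) := by
  -- quadratic form analysis
  have hQcont : Continuous fun z : Fin n → ℝ => z ⬝ᵥ P *ᵥ z := by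
    simp only [dotProduct, Matrix.mulVec]
    exact continuous_finset_sum _ fun i _ => (continuous_apply i).mul
      (continuous_finset_sum _ fun j _ => (continuous_const.mul (continuous_apply j)))
  haveI : Nonempty (Fin n) := ⟨⟨0, hn⟩⟩
  haveI : Nontrivial (Fin n → ℝ) := inferInstance
  have hne : (Metric.sphere (0 : Fin n → ℝ) 1).Nonempty :=
    NormedSpace.sphere_nonempty.2 zero_le_one
  obtain ⟨zm, hzm, hmin'⟩ :=
    (isCompact_sphere (0 : Fin n → ℝ) 1).exists_isMinOn hne hQcont.continuousOn
  obtain ⟨zM, hzM, hmax'⟩ :=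
    (isCompact_sphere (0 : Fin n → ℝ) 1).exists_isMaxOn hne hQcont.continuousOn
  have hmin : ∀ z ∈ Metric.sphere (0 : Fin n → ℝ) 1, zm ⬝ᵥ P *ᵥ zm ≤ z ⬝ᵥ P *ᵥ z :=
    fun z hz => hmin' hz
  have hmax : ∀ z ∈ Metric.sphere (0 : Fin n → ℝ) 1, z ⬝ᵥ P *ᵥ z ≤ zM ⬝ᵥ P *ᵥ zM :=
    fun z hz => hmax' hz
  set m := zm ⬝ᵥ P *ᵥ zm with hm
  set M := zM ⬝ᵥ P *ᵥ zM with hM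
  have hzmne : zm ≠ 0 := by
    have h1 : ‖zm‖ = 1 := mem_sphere_zero_iff_norm.mp hzm
    intro h0; rw [h0] at h1; simp at h1
  have hmpos : 0 < m := by simpa using hP.dotProduct_mulVec_pos hzmne
  have hMpos : 0 < M := lt_of_lt_of_le hmpos (hmax zm hzm)
  have hQhom : ∀ (c : ℝ) (z : Fin n → ℝ), (c • z) ⬝ᵥ P *ᵥ (c • z) = c^2 * (z ⬝ᵥ P *ᵥ z) := by
    intro c z
    simp only [Matrix.mulVec_smul, dotProduct_smul, smul_dotProduct, smul_eq_mul]
    ring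
  have hlow : ∀ z : Fin n → ℝ, m * ‖z‖^2 ≤ z ⬝ᵥ P *ᵥ z := by
    intro z
    rcases eq_or_ne z 0 with rfl | hz
    · simp
    · have hnz : ‖z‖ ≠ 0 := norm_ne_zero_iff.2 hz
      have hu : (‖z‖⁻¹ • z) ∈ Metric.sphere (0 : Fin n → ℝ) 1 := by
        rw [mem_sphere_zero_iff_norm, norm_smul, norm_inv, norm_norm,
          inv_mul_cancel₀ hnz]
      have hz2 : ‖z‖ • (‖z‖⁻¹ • z) = z := by
        rw [smul_smul, mul_inv_cancel₀ hnz, one_smul]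
      have := hQhom ‖z‖ (‖z‖⁻¹ • z)
      rw [hz2] at this
      rw [this]
      have := hmin _ hu
      nlinarith [sq_nonneg ‖z‖]
  have hupp : ∀ z : Fin n → ℝ, z ⬝ᵥ P *ᵥ z ≤ M * ‖z‖^2 := by
    intro z
    rcases eq_or_ne z 0 with rfl | hz
    · simp
    · have hnz : ‖z‖ ≠ 0 := norm_ne_zero_iff.2 hz
      have hu : (‖z‖⁻¹ • z) ∈ Metric.sphere (0 : Fin n → ℝ) 1 := by
        rw [mem_sphere_zero_iff_norm, norm_smul, norm_inv, norm_norm,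
          inv_mul_cancel₀ hnz]
      have hz2 : ‖z‖ • (‖z‖⁻¹ • z) = z := by
        rw [smul_smul, mul_inv_cancel₀ hnz, one_smul]
      have := hQhom ‖z‖ (‖z‖⁻¹ • z)
      rw [hz2] at this
      rw [this]
      have := hmax _ hu
      nlinarith [sq_nonneg ‖z‖]
  intro ε hε
  refine ⟨ε * Real.sqrt (m / M), by positivity, ?_⟩
  intro x hsol hx0 k
  set X : ℕ → Fin n → ℝ := fun j => x (a + (j : ℝ) * h) with hX
  have hXa : X 0 = x a := by simp [hX]
  -- the B sequence
  obtain ⟨B, hB0, hBnn, hBanti, hBeq⟩ : ∃ B : ℕ → ℝ, B 0 = 1 ∧ (∀ j, 0 ≤ B j) ∧ Antitone B ∧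
      ∀ k : ℕ, ∑ j ∈ Finset.range (k+1), B (k-j) • (X (j+1) - X j)
        = (h ^ ν) • f (a + (1-ν)*h + (k:ℝ)*h) (X (k+1)) := by
    rcases eq_or_lt_of_le hν1 with hν | hν
    · -- ν = 1
      subst hν
      refine ⟨fun j => if j = 0 then 1 else 0, by norm_num, ?_, ?_, ?_⟩
      · intro j; dsimp only; split <;> norm_num
      · apply antitone_nat_of_succ_le
        intro j
        simp only [Nat.succ_ne_zero, if_false]
        split <;> norm_num
      · intro k
        have hstep : X (k+1) - X k = h • f (a + (1-(1:ℝ))*h + (k:ℝ)*h) (X (k+1)) := by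
          funext i
          have := hsol k i
          rw [caputoD, if_pos rfl, fdiff] at this
          have hpt1 : a + (k:ℝ)*h + h = a + ((k+1 : ℕ) : ℝ)*h := by push_cast; ring
          have hpt2 : a + ((k:ℝ) + 1)*h = a + ((k+1 : ℕ) : ℝ)*h := by push_cast; ring
          rw [hpt1, hpt2] at this
          simp only [Pi.sub_apply, Pi.smul_apply, smul_eq_mul, hX]
          field_simp at this ⊢
          linarith [this]
        rw [Finset.sum_eq_single_of_mem k (self_mem_range_succ k)]
        · rw [Nat.sub_self]
          norm_num [hstep, Real.rpow_one]
        · intro j hj hjk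
          have : k - j ≠ 0 := by
            have hjlt : j < k := lt_of_le_of_ne (Nat.lt_succ_iff.mp (mem_range.mp hj)) hjk
            omega
          simp [this]
    · -- ν < 1
      have hΓpos : (0:ℝ) < Real.Gamma (1 - ν) := Real.Gamma_pos_of_pos (by linarith)
      have hνne : ν ≠ 1 := ne_of_lt hν
      refine ⟨bb ν, bb_zero hν, fun j => (bb_pos hν j).le, bb_anti hν0 hν, ?_⟩
      intro k
      funext i
      have hs := hsol k i
      rw [caputoD, if_neg hνne] at hs
      have hsum : ∀ j ∈ Finset.range (k+1),
          hfact h (a + (1-ν)*h + (k:ℝ)*h - (a + (j:ℝ)*h + h)) (-ν) *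
            fdiff h (fun t => x t i) (a + (j:ℝ)*h)
          = (h ^ (-ν) * Real.Gamma (1-ν) / h) * (bb ν (k-j) * (X (j+1) i - X j i)) := by
        intro j hj
        have hjk : j ≤ k := Nat.lt_succ_iff.mp (mem_range.mp hj)
        have harg : a + (1-ν)*h + (k:ℝ)*h - (a + (j:ℝ)*h + h) = (((k-j : ℕ):ℝ) - ν) * h := by
          rw [Nat.cast_sub hjk]; ring
        have hpt : a + (j:ℝ)*h + h = a + ((j+1 : ℕ):ℝ)*h := by push_cast; ring
        rw [harg, hfact_eq hh hν, fdiff]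
        simp only [hpt, hX]
        field_simp
      rw [Finset.sum_congr rfl hsum, ← Finset.mul_sum] at hs
      have hrw : h / Real.Gamma (1-ν) * (h ^ (-ν) * Real.Gamma (1-ν) / h *
          ∑ j ∈ Finset.range (k+1), bb ν (k-j) * (X (j+1) i - X j i))
          = h ^ (-ν) * ∑ j ∈ Finset.range (k+1), bb ν (k-j) * (X (j+1) i - X j i) := by
        field_simp
      rw [hrw] at hs
      have hpow : h ^ ν * h ^ (-ν) = 1 := by
        rw [← Real.rpow_add hh]; simp
      have : ∑ j ∈ Finset.range (k+1), bb ν (k-j) * (X (j+1) i - X j i)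
          = h ^ ν * f (a + (1-ν)*h + (k:ℝ)*h) (x (a + ((k:ℝ)+1)*h)) i := by
        calc ∑ j ∈ Finset.range (k+1), bb ν (k-j) * (X (j+1) i - X j i)
            = (h ^ ν * h ^ (-ν)) * ∑ j ∈ Finset.range (k+1), bb ν (k-j) * (X (j+1) i - X j i) := by
              rw [hpow, one_mul]
          _ = h ^ ν * (h ^ (-ν) * ∑ j ∈ Finset.range (k+1), bb ν (k-j) * (X (j+1) i - X j i)) := by
              ring
          _ = h ^ ν * f (a + (1-ν)*h + (k:ℝ)*h) (x (a + ((k:ℝ)+1)*h)) i := by rw [hs]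
      have hpt2 : a + ((k:ℝ) + 1)*h = a + ((k+1 : ℕ) : ℝ)*h := by push_cast; ring
      rw [hpt2] at this
      simp only [Finset.sum_apply, Pi.smul_apply, Pi.sub_apply, smul_eq_mul, hX]
      exact this
  -- Lyapunov decrease
  have key : ∀ k, X k ⬝ᵥ P *ᵥ X k ≤ X 0 ⬝ᵥ P *ᵥ X 0 := by
    intro k
    induction k using Nat.strong_induction_on with
    | _ k ih =>
      match k with
      | 0 => exact le_refl _
      | (k+1) =>
        set u : ℕ → ℝ := fun j => X (k+1) ⬝ᵥ P *ᵥ X j with hu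
        set R := Real.sqrt (X 0 ⬝ᵥ P *ᵥ X 0) with hR
        set sQ := Real.sqrt (X (k+1) ⬝ᵥ P *ᵥ X (k+1)) with hsQ
        have hRnn : 0 ≤ R := Real.sqrt_nonneg _
        have hsQnn : 0 ≤ sQ := Real.sqrt_nonneg _
        have hule : ∀ j, j ≤ k + 1 → j ≠ k + 1 → u j ≤ sQ * R := by
          intro j hj hjne
          have h1 : u j ≤ sQ * Real.sqrt (X j ⬝ᵥ P *ᵥ X j) :=
            quad_cs P hPsym hP (X (k+1)) (X j)
          have h2 : Real.sqrt (X j ⬝ᵥ P *ᵥ X j) ≤ R :=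
            Real.sqrt_le_sqrt (ih j (lt_of_le_of_ne hj hjne))
          calc u j ≤ sQ * Real.sqrt (X j ⬝ᵥ P *ᵥ X j) := h1
            _ ≤ sQ * R := mul_le_mul_of_nonneg_left h2 hsQnn
        -- the key sum inequality
        have hS : ∑ j ∈ Finset.range (k+1), B (k-j) * (u (j+1) - u j) ≤ 0 := by
          let L : (Fin n → ℝ) →ₗ[ℝ] ℝ :=
            { toFun := fun v => X (k+1) ⬝ᵥ P *ᵥ v
              map_add' := fun v w => by simp [Matrix.mulVec_add, dotProduct_add]
              map_smul' := fun c v => by simp [Matrix.mulVec_smul, dotProduct_smul] }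
          have hLsum : ∑ j ∈ Finset.range (k+1), B (k-j) * (u (j+1) - u j)
              = L (∑ j ∈ Finset.range (k+1), B (k-j) • (X (j+1) - X j)) := by
            rw [_root_.map_sum]
            refine Finset.sum_congr rfl fun j _ => ?_
            rw [_root_.map_smul, _root_.map_sub]
            simp [L, hu, smul_eq_mul]
          rw [hLsum, hBeq k, _root_.map_smul]
          have hfneg : L (f (a + (1-ν)*h + (k:ℝ)*h) (X (k+1))) ≤ 0 := hle k (X (k+1))
          have hhp : (0:ℝ) < h ^ ν := Real.rpow_pos_of_pos hh ν
          calc (h ^ ν) • L (f (a + (1-ν)*h + (k:ℝ)*h) (X (k+1)))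
              = h ^ ν * L (f (a + (1-ν)*h + (k:ℝ)*h) (X (k+1))) := by simp [smul_eq_mul]
            _ ≤ 0 := mul_nonpos_of_nonneg_of_nonpos hhp.le hfneg
        -- Abel summation
        have e1 : ∑ j ∈ Finset.range k, (B (k-(j+1)) - B (k-j)) * u (j+1)
            = ∑ j ∈ Finset.range k, B (k-(j+1)) * u (j+1)
              - ∑ j ∈ Finset.range k, B (k-j) * u (j+1) := by
          rw [← Finset.sum_sub_distrib]
          exact Finset.sum_congr rfl fun j _ => by ring
        have d1 : ∑ j ∈ Finset.range (k+1), B (k-j) * (u (j+1) - u j)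
            = ∑ j ∈ Finset.range (k+1), B (k-j) * u (j+1)
              - ∑ j ∈ Finset.range (k+1), B (k-j) * u j := by
          rw [← Finset.sum_sub_distrib]
          exact Finset.sum_congr rfl fun j _ => by ring
        have d2 : ∑ j ∈ Finset.range (k+1), B (k-j) * u (j+1)
            = ∑ j ∈ Finset.range k, B (k-j) * u (j+1) + u (k+1) := by
          rw [Finset.sum_range_succ, Nat.sub_self, hB0, one_mul]
        have d3 : ∑ j ∈ Finset.range (k+1), B (k-j) * u j
            = ∑ j ∈ Finset.range k, B (k-(j+1)) * u (j+1) + B k * u 0 := by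
          rw [Finset.sum_range_succ']
          simp
        have habel : u (k+1) = (∑ j ∈ Finset.range (k+1), B (k-j) * (u (j+1) - u j))
            + B k * u 0 + ∑ j ∈ Finset.range k, (B (k-(j+1)) - B (k-j)) * u (j+1) := by
          rw [d1, d2, d3, e1]; ring
        -- bound the RHS
        have htel : ∑ j ∈ Finset.range k, (B (k-(j+1)) - B (k-j)) = B 0 - B k := by
          have := Finset.sum_range_sub (fun j => B (k - j)) k
          simpa [Nat.sub_self] using this
        have hsumle : ∑ j ∈ Finset.range k, (B (k-(j+1)) - B (k-j)) * u (j+1)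
            ≤ ∑ j ∈ Finset.range k, (B (k-(j+1)) - B (k-j)) * (sQ * R) := by
          refine Finset.sum_le_sum fun j hj => ?_
          have hcnn : 0 ≤ B (k-(j+1)) - B (k-j) := by
            have := hBanti (Nat.sub_le_sub_left (Nat.le_succ j) k)
            linarith
          have hjlt : j < k := mem_range.mp hj
          exact mul_le_mul_of_nonneg_left (hule (j+1) (by omega) (by omega)) hcnn
        have hu0le : u 0 ≤ sQ * R := hule 0 (by omega) (by omega)
        have hBknn : 0 ≤ B k := hBnn k
        have hmain : u (k+1) ≤ sQ * R := by
          rw [habel]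
          have h1 : ∑ j ∈ Finset.range k, (B (k-(j+1)) - B (k-j)) * (sQ * R)
              = (B 0 - B k) * (sQ * R) := by
            rw [← Finset.sum_mul, htel]
          calc (∑ j ∈ Finset.range (k+1), B (k-j) * (u (j+1) - u j))
                + B k * u 0 + ∑ j ∈ Finset.range k, (B (k-(j+1)) - B (k-j)) * u (j+1)
              ≤ 0 + B k * (sQ * R) + ∑ j ∈ Finset.range k, (B (k-(j+1)) - B (k-j)) * (sQ * R) :=
                add_le_add (add_le_add hS (mul_le_mul_of_nonneg_left hu0le hBknn)) hsumle
            _ = sQ * R := by rw [h1, hB0]; ring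
        have hq1 : sQ^2 = X (k+1) ⬝ᵥ P *ᵥ X (k+1) :=
          Real.sq_sqrt (quad_nonneg P hP _)
        have hq2 : R^2 = X 0 ⬝ᵥ P *ᵥ X 0 :=
          Real.sq_sqrt (quad_nonneg P hP _)
        have huk : u (k+1) = X (k+1) ⬝ᵥ P *ᵥ X (k+1) := rfl
        rw [← hq1, ← hq2]
        nlinarith [sq_nonneg (sQ - R), hmain, huk, hq1]
  -- conclusion
  show ‖X k‖ < ε
  have h1 : m * ‖X k‖^2 ≤ X k ⬝ᵥ P *ᵥ X k := hlow (X k)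
  have h2 : X k ⬝ᵥ P *ᵥ X k ≤ X 0 ⬝ᵥ P *ᵥ X 0 := key k
  have h3 : X 0 ⬝ᵥ P *ᵥ X 0 ≤ M * ‖X 0‖^2 := hupp (X 0)
  have h4 : ‖X 0‖ < ε * Real.sqrt (m / M) := by rw [hXa]; exact hx0
  have hδ : (ε * Real.sqrt (m / M))^2 = ε^2 * (m / M) := by
    rw [mul_pow, Real.sq_sqrt (div_nonneg hmpos.le hMpos.le)]
  have h5 : M * ‖X 0‖^2 < M * (ε^2 * (m / M)) := by
    have : ‖X 0‖^2 < (ε * Real.sqrt (m / M))^2 := by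
      apply pow_lt_pow_left₀ h4 (norm_nonneg _)
      norm_num
    rw [← hδ]
    exact mul_lt_mul_of_pos_left this hMpos
  have h6 : M * (ε^2 * (m / M)) = ε^2 * m := by field_simp
  have h7 : m * ‖X k‖^2 < ε^2 * m := by linarith
  have h8 : ‖X k‖^2 < ε^2 := by
    have := (mul_lt_mul_iff_right₀ hmpos).mp (by linarith : m * ‖X k‖^2 < m * ε^2)
    linarith
  exact lt_of_pow_lt_pow_left₀ 2 hε.le h8
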